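/- For every integer $k \geq 1$ one has $p(Z_k \cdot \sigma) = \frac{n}{k!}\,\ell^{k}$ in $S$. (This is formula (3.5) of Claim 3.1 in the proof of Proposition 1.1: ${\pi_x}_*(Z_k \cdot \sigma_x) = \frac{n}{k!} c_1(L_x)^k$.) -/

import Mathlib

/-- Formula (3.5) of Claim 3.1:
`π_* (Z_k · σ_x) = (n/k!) c₁(L_x)^k`, i.e. `p (Z k * σ) = (n/k!) ℓ^k` for `k ≥ 1`. -/
theorem stmt_6 {R S : Type*} [CommRing R] [Algebra ℚ R] [CommRing S] [Algebra ℚ S]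
    (σ L : R) (hσ : σ ^ 2 = -(σ * L))
    (n : ℕ) (t : ℕ → R) (ht0 : t 0 = (n : R)) (ht : ∀ j, 1 ≤ j → σ * t j = 0)
    (c : R) (hc : c = 2 * σ + L)
    (Z : ℕ → R)
    (hZ : ∀ k : ℕ, Z k = ∑ j ∈ Finset.range (k + 1),
      (((-1 : ℚ) ^ (k - j) / (k - j).factorial) •
        ((t j - ((j.factorial : ℚ)⁻¹ • c ^ j)) * σ ^ (k - j))))
    (π : S →+* R) (ℓ : S) (hL : L = π ℓ)
    (p : R →+ S)
    (hproj : ∀ (a : S) (x : R), p (π a * x) = a * p x)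
    (hpπ : ∀ a : S, p (π a) = 0) (hpσ : p σ = 1)
    (k : ℕ) (hk : 1 ≤ k) :
    p (Z k * σ) = ((n : ℚ) / k.factorial) • ℓ ^ k := by
  -- basic relations
  have hσm : ∀ m : ℕ, σ ^ (m + 1) = σ * (-L) ^ m := by
    intro m
    induction m with
    | zero => simp
    | succ m ih =>
      have h1 : σ ^ (m + 2) = σ ^ (m + 1) * σ := by ring
      rw [h1, ih]
      have h2 : σ * (-L) ^ m * σ = σ ^ 2 * (-L) ^ m := by ring
      rw [h2, hσ]
      ring
  have hcs : c * σ = σ * (-L) := by rw [hc]; linear_combination 2 * hσ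
  have hcσ : ∀ j : ℕ, c ^ j * σ = σ * (-L) ^ j := by
    intro j
    induction j with
    | zero => simp
    | succ j ih =>
      have : c ^ (j + 1) * σ = c ^ j * (c * σ) := by ring
      rw [this, hcs, ← mul_assoc, ih]
      ring
  -- each term of the sum
  have hterm : ∀ j ∈ Finset.range (k + 1),
      (((-1 : ℚ) ^ (k - j) / (k - j).factorial) •
        ((t j - ((j.factorial : ℚ)⁻¹ • c ^ j)) * σ ^ (k - j))) * σ
      = (((-1 : ℚ) ^ (k - j) / (k - j).factorial) *
          (if j = 0 then (n : ℚ) - 1 else -((j.factorial : ℚ)⁻¹))) • (σ * (-L) ^ k) := by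
    intro j hj
    have hjk : j ≤ k := Nat.lt_succ_iff.mp (Finset.mem_range.mp hj)
    rw [smul_mul_assoc, mul_assoc]
    rcases Nat.eq_zero_or_pos j with hj0 | hj1
    · subst hj0
      simp only [if_pos rfl, Nat.sub_zero, Nat.factorial_zero, pow_zero]
      have hσk : σ ^ k * σ = σ * (-L) ^ k := by
        rw [← pow_succ, hσm]
      rw [hσk, ht0]
      simp only [Algebra.smul_def, map_mul, map_sub, map_one, Nat.cast_one, inv_one,
        map_natCast, if_true]
      ring
    · rw [if_neg (Nat.pos_iff_ne_zero.mp hj1)]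
      have hσk : σ ^ (k - j) * σ = σ * (-L) ^ (k - j) := by
        rw [← pow_succ, hσm]
      rw [hσk, sub_mul]
      have h1 : t j * (σ * (-L) ^ (k - j)) = 0 := by
        rw [← mul_assoc, mul_comm (t j) σ, ht j hj1, zero_mul]
      have h2 : ((j.factorial : ℚ)⁻¹ • c ^ j) * (σ * (-L) ^ (k - j))
          = (j.factorial : ℚ)⁻¹ • (σ * (-L) ^ k) := by
        rw [smul_mul_assoc, ← mul_assoc, hcσ, mul_assoc, ← pow_add,
          Nat.add_sub_cancel' hjk]
      rw [h1, h2, zero_sub, smul_neg, ← neg_smul, smul_smul, neg_mul_comm]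
  -- the rational coefficient
  have hzero : ∑ j ∈ Finset.range (k + 1),
      ((-1 : ℚ) ^ (k - j) / ((k - j).factorial * j.factorial)) = 0 := by
    have halt := Int.alternating_sum_range_choose (n := k)
    rw [if_neg (by omega : k ≠ 0)] at halt
    have haltQ : ∑ j ∈ Finset.range (k + 1), ((-1 : ℚ) ^ j * (k.choose j : ℚ)) = 0 := by
      have := congrArg (fun z : ℤ => (z : ℚ)) halt
      push_cast at this
      exact this
    have : ∑ j ∈ Finset.range (k + 1),
        ((-1 : ℚ) ^ (k - j) / ((k - j).factorial * j.factorial))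
        = ∑ j ∈ Finset.range (k + 1),
          ((-1 : ℚ) ^ k / k.factorial) * ((-1 : ℚ) ^ j * (k.choose j : ℚ)) := by
      refine Finset.sum_congr rfl ?_
      intro j hj
      have hjk : j ≤ k := Nat.lt_succ_iff.mp (Finset.mem_range.mp hj)
      have hsgn : (-1 : ℚ) ^ (k - j) * (-1 : ℚ) ^ j = (-1 : ℚ) ^ k := by
        rw [← pow_add, Nat.sub_add_cancel hjk]
      have hj2 : ((-1 : ℚ) ^ j) * ((-1 : ℚ) ^ j) = 1 := by
        rw [← pow_add]; exact Even.neg_one_pow ⟨j, rfl⟩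
      have hsgn2 : (-1 : ℚ) ^ (k - j) = (-1 : ℚ) ^ k * (-1 : ℚ) ^ j := by
        linear_combination ((-1 : ℚ) ^ j) * hsgn - ((-1 : ℚ) ^ (k - j)) * hj2
      have hch : (k.choose j : ℚ) = k.factorial / (j.factorial * (k - j).factorial) :=
        Nat.cast_choose ℚ hjk
      have e1 : ((k - j).factorial : ℚ) ≠ 0 := Nat.cast_ne_zero.mpr (Nat.factorial_ne_zero _)
      have e2 : (j.factorial : ℚ) ≠ 0 := Nat.cast_ne_zero.mpr (Nat.factorial_ne_zero _)
      have e3 : (k.factorial : ℚ) ≠ 0 := Nat.cast_ne_zero.mpr (Nat.factorial_ne_zero _)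
      rw [hch, hsgn2]
      field_simp
    rw [this, ← Finset.mul_sum, haltQ, mul_zero]
  have hQ : ∑ j ∈ Finset.range (k + 1),
      (((-1 : ℚ) ^ (k - j) / (k - j).factorial) *
        (if j = 0 then (n : ℚ) - 1 else -((j.factorial : ℚ)⁻¹)))
      = (-1 : ℚ) ^ k * n / k.factorial := by
    have hsplit : ∀ j ∈ Finset.range (k + 1),
        (((-1 : ℚ) ^ (k - j) / (k - j).factorial) *
          (if j = 0 then (n : ℚ) - 1 else -((j.factorial : ℚ)⁻¹)))
        = -((-1 : ℚ) ^ (k - j) / ((k - j).factorial * j.factorial)) +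
          (if j = 0 then (-1 : ℚ) ^ k * n / k.factorial else 0) := by
      intro j hj
      rcases Nat.eq_zero_or_pos j with hj0 | hj1
      · subst hj0
        simp only [if_pos rfl, Nat.sub_zero, Nat.factorial_zero, Nat.cast_one]
        field_simp
        have e3 : (k.factorial : ℚ) ≠ 0 := Nat.cast_ne_zero.mpr (Nat.factorial_ne_zero _)
        simp only [if_true]
        linear_combination (-(n : ℚ) * (-1 : ℚ) ^ k) * mul_inv_cancel₀ e3
      · rw [if_neg (Nat.pos_iff_ne_zero.mp hj1), if_neg (Nat.pos_iff_ne_zero.mp hj1)]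
        field_simp
        ring
    rw [Finset.sum_congr rfl hsplit, Finset.sum_add_distrib, Finset.sum_neg_distrib,
      hzero, neg_zero, zero_add, Finset.sum_ite_eq' (Finset.range (k + 1)) 0,
      if_pos (Finset.mem_range.mpr (by omega))]
  -- main computation
  have key : Z k * σ = ((-1 : ℚ) ^ k * n / k.factorial) • (σ * (-L) ^ k) := by
    rw [hZ, Finset.sum_mul, Finset.sum_congr rfl hterm, ← Finset.sum_smul, hQ]
  rw [key]
  -- convert (-L)^k to L^k
  have hLk : ((-1 : ℚ) ^ k * n / k.factorial) • (σ * (-L) ^ k)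
      = ((n : ℚ) / k.factorial) • (π (ℓ ^ k) * σ) := by
    have hneg : (-L : R) ^ k = (-1 : ℚ) ^ k • L ^ k := by
      rw [neg_pow]
      have : (-1 : R) = (-1 : ℚ) • (1 : R) := by simp
      rw [this, smul_pow, smul_mul_assoc, one_pow, one_mul]
    rw [hneg, mul_smul_comm, smul_smul]
    have hcoef : (-1 : ℚ) ^ k * n / k.factorial * (-1 : ℚ) ^ k = (n : ℚ) / k.factorial := by
      have : ((-1 : ℚ) ^ k) * ((-1 : ℚ) ^ k) = 1 := by
        rw [← pow_add]; exact Even.neg_one_pow ⟨k, rfl⟩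
      field_simp
      linear_combination (n : ℚ) * this
    rw [hcoef]
    congr 1
    rw [hL, ← map_pow, mul_comm]
  rw [hLk, map_rat_smul, hproj, hpσ, mul_one]
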